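/- Let X₁, X₂, … be i.i.d. copies of the total progeny of a critical Galton–Watson tree with Poisson(1) offspring distribution, and set S_n = X₁ + ⋯ + X_n. Then ∑_{n=1}^∞ 1/√(S_n) = ∞ almost surely. -/

import Mathlib

open MeasureTheory ProbabilityTheory Filter Real
open scoped ENNReal NNReal

namespace GWaux



/-! ### The combinatorial cycle-lemma bound -/

def eext (k : ℕ) (a : Fin k → ℕ) (j : ℕ) : ℕ := if h : j < k then a ⟨j, h⟩ else 0

def psum (k : ℕ) (a : Fin k → ℕ) (l : ℕ) : ℕ := ∑ j ∈ Finset.range l, eext k a j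

/-- first-passage (Łukasiewicz) sequences of length `k`. -/
def AA (k : ℕ) : Set (Fin k → ℕ) :=
  {a | (1 ≤ k ∧ psum k a k + 1 = k) ∧ ∀ l < k, ¬(1 ≤ l ∧ psum k a l + 1 = l)}

def BB (k : ℕ) : Set (Fin k → ℕ) := {b | (∑ j, b j) + 1 = k}

lemma psum_full (k : ℕ) (a : Fin k → ℕ) : psum k a k = ∑ j, a j := by
  rw [psum, ← Fin.sum_univ_eq_sum_range]
  apply Finset.sum_congr rfl
  intro j _
  simp [eext, j.isLt]

lemma AA_lower {k : ℕ} {a : Fin k → ℕ} (ha : a ∈ AA k) : ∀ l, l < k → l ≤ psum k a l := by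
  intro l
  induction l with
  | zero => intro _; exact Nat.zero_le _
  | succ n ih =>
    intro hl
    have h1 : n ≤ psum k a n := ih (by omega)
    have h2 : psum k a (n+1) = psum k a n + eext k a n := Finset.sum_range_succ _ _
    have h3 := ha.2 (n+1) hl
    by_contra hcon
    have : psum k a (n+1) = n := by omega
    exact h3 ⟨by omega, by omega⟩

def shiftf (k : ℕ) (u j : Fin k) : Fin k := ⟨(j.val + u.val) % k, Nat.mod_lt _ j.pos⟩

lemma shiftf_inj {k : ℕ} (u : Fin k) : Function.Injective (shiftf k u) := by
  intro j j' h
  have h1 : (j.val + u.val) % k = (j'.val + u.val) % k := congrArg Fin.val h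
  have h2 : j.val % k = j'.val % k :=
    Nat.ModEq.add_right_cancel' u.val h1
  rw [Nat.mod_eq_of_lt j.isLt, Nat.mod_eq_of_lt j'.isLt] at h2
  exact Fin.ext h2

lemma shiftf_bij {k : ℕ} (u : Fin k) : Function.Bijective (shiftf k u) :=
  Finite.injective_iff_bijective.1 (shiftf_inj u)

def rot (k : ℕ) (u : Fin k) (a : Fin k → ℕ) : Fin k → ℕ := fun j => a (shiftf k u j)

lemma rot_sum {k : ℕ} (u : Fin k) (a : Fin k → ℕ) : ∑ j, rot k u a j = ∑ j, a j :=
  Fintype.sum_bijective (shiftf k u) (shiftf_bij u) _ _ (fun _ => rfl)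

lemma rot_rot {k : ℕ} (u v : Fin k) (a : Fin k → ℕ) :
    rot k u (rot k v a) = fun j : Fin k => a ⟨(j.val + u.val + v.val) % k,
      Nat.mod_lt _ j.pos⟩ := by
  funext j
  simp only [rot, shiftf]
  congr 1
  apply Fin.ext
  simp only []
  rw [Nat.mod_add_mod]

lemma rot_val_zero {k : ℕ} (u : Fin k) (hu : u.val = 0) (a : Fin k → ℕ) :
    rot k u a = a := by
  funext j
  simp only [rot, shiftf, hu, Nat.add_zero]
  congr 1
  exact Fin.ext (Nat.mod_eq_of_lt j.isLt)

/-- partial sums of a rotation: the split identity. -/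
lemma psum_rot {k : ℕ} (u : Fin k) (a : Fin k → ℕ) :
    psum k (rot k u a) (k - u.val) + psum k a u.val = psum k a k := by
  have htk : u.val < k := u.isLt
  have h1 : psum k (rot k u a) (k - u.val)
      = ∑ j ∈ Finset.range (k - u.val), eext k a (u.val + j) := by
    apply Finset.sum_congr rfl
    intro j hj
    rw [Finset.mem_range] at hj
    have hjt : j + u.val < k := by omega
    have e1 : eext k (rot k u a) j = a ⟨j + u.val, hjt⟩ := by
      simp only [eext, dif_pos (show j < k by omega), rot, shiftf]
      congr 1
      exact Fin.ext (by simp [Nat.mod_eq_of_lt hjt])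
    have e2 : eext k a (u.val + j) = a ⟨j + u.val, hjt⟩ := by
      simp only [eext, dif_pos (show u.val + j < k by omega)]
      apply congrArg a
      apply Fin.ext
      show u.val + j = j + u.val
      omega
    rw [e1, e2]
  have h2 : ∑ j ∈ Finset.range (k - u.val), eext k a (u.val + j) =
      ∑ j ∈ Finset.Ico u.val k, eext k a j := by
    rw [Finset.sum_Ico_eq_sum_range]
  have h3 : psum k a u.val + ∑ j ∈ Finset.Ico u.val k, eext k a j = psum k a k := by
    rw [psum, psum, Finset.range_eq_Ico, Finset.range_eq_Ico]
    exact Finset.sum_Ico_consecutive (eext k a) (Nat.zero_le u.val) (le_of_lt htk)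
  omega

/-- the easy half of the cycle lemma: at most one rotation is a first-passage path. -/
lemma rot_mem_AA {k : ℕ} {a : Fin k → ℕ} (ha : a ∈ AA k) (u : Fin k)
    (hu : rot k u a ∈ AA k) : u.val = 0 := by
  by_contra hne
  have ht0 : 0 < u.val := Nat.pos_of_ne_zero hne
  have htk : u.val < k := u.isLt
  have hm : k - u.val < k := by omega
  have h1 : k - u.val ≤ psum k (rot k u a) (k - u.val) := AA_lower hu (k - u.val) hm
  have h2 : u.val ≤ psum k a u.val := AA_lower ha u.val htk
  have h3 : psum k a k + 1 = k := ha.1.2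
  have h4 := psum_rot u a
  omega

noncomputable def w (k : ℕ) (a : Fin k → ℕ) : ℝ≥0∞ :=
  ∏ j, ENNReal.ofReal (Real.exp (-1) / (a j).factorial)

lemma w_rot {k : ℕ} (u : Fin k) (a : Fin k → ℕ) : w k (rot k u a) = w k a :=
  Fintype.prod_bijective (shiftf k u) (shiftf_bij u) _ _ (fun _ => rfl)

lemma cycle_bound (k : ℕ) :
    (k : ℝ≥0∞) * ∑' (a : (AA k)), w k a.val ≤ ∑' (b : (BB k)), w k b.val := by
  classical
  have hmem : ∀ (p : (AA k) × Fin k), rot k p.2 p.1.val ∈ BB k := by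
    rintro ⟨⟨a, ha⟩, u⟩
    simp only [BB, Set.mem_setOf_eq, rot_sum]
    rw [← psum_full]
    exact ha.1.2
  set Φ : (AA k) × Fin k → (BB k) := fun p => ⟨rot k p.2 p.1.val, hmem p⟩ with hΦ
  have hinj : Function.Injective Φ := by
    rintro ⟨⟨a, ha⟩, u⟩ ⟨⟨a', ha'⟩, u'⟩ h
    have hrot : rot k u a = rot k u' a' := congrArg Subtype.val h
    have hk : 0 < k := u.pos
    set v : Fin k := ⟨(k - u'.val) % k, Nat.mod_lt _ hk⟩ with hv
    have hvval : v.val = (k - u'.val) % k := rfl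
    have h1 : rot k v (rot k u' a') = a' := by
      rw [rot_rot]
      funext j
      have hval : (j.val + v.val + u'.val) % k = j.val := by
        rw [hvval]
        rcases Nat.eq_zero_or_pos u'.val with h0 | h0
        · rw [h0]
          simp [Nat.mod_eq_of_lt j.isLt]
        · have e1 : (k - u'.val) % k = k - u'.val := Nat.mod_eq_of_lt (by omega)
          rw [e1, show j.val + (k - u'.val) + u'.val = j.val + k by omega]
          simp [Nat.add_mod_right, Nat.mod_eq_of_lt j.isLt]
      exact congrArg a' (Fin.ext hval)
    have h2 : rot k v (rot k u a) = a' := by rw [hrot]; exact h1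
    rw [rot_rot] at h2
    set c : Fin k := ⟨(u.val + v.val) % k, Nat.mod_lt _ hk⟩ with hcdef
    have h3 : rot k c a = a' := by
      funext j
      rw [← h2]
      simp only [rot, shiftf]
      apply congrArg a
      apply Fin.ext
      show (j.val + (u.val + v.val) % k) % k = (j.val + v.val + u.val) % k
      rw [Nat.add_mod_mod]
      congr 1
      omega
    have h4 : c.val = 0 := rot_mem_AA ha c (h3 ▸ ha')
    have h5 : rot k c a = a := rot_val_zero c h4 a
    have ha'' : a = a' := by rw [← h3, h5]
    have h6 : (u.val + v.val) % k = 0 := h4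
    have h7 : (u'.val + v.val) % k = 0 := by
      rw [hvval]
      rcases Nat.eq_zero_or_pos u'.val with h0 | h0
      · rw [h0]; simp
      · have e1 : (k - u'.val) % k = k - u'.val := Nat.mod_eq_of_lt (by omega)
        rw [e1, show u'.val + (k - u'.val) = k by omega, Nat.mod_self]
    have h8 : u.val = u'.val := by
      have d1 : k ∣ u.val + v.val := Nat.dvd_of_mod_eq_zero h6
      have d2 : k ∣ u'.val + v.val := Nat.dvd_of_mod_eq_zero h7
      obtain ⟨q1, hq1⟩ := d1
      obtain ⟨q2, hq2⟩ := d2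
      have b1 : u.val < k := u.isLt
      have b2 : u'.val < k := u'.isLt
      have b3 : v.val < k := v.isLt
      have hq1' : q1 ≤ 1 := by
        by_contra hcon
        have : k * 2 ≤ k * q1 := Nat.mul_le_mul_left k (by omega)
        omega
      have hq2' : q2 ≤ 1 := by
        by_contra hcon
        have : k * 2 ≤ k * q2 := Nat.mul_le_mul_left k (by omega)
        omega
      interval_cases q1 <;> interval_cases q2 <;> omega
    exact Prod.ext (Subtype.ext ha'') (Fin.ext h8)
  calc (k : ℝ≥0∞) * ∑' (a : (AA k)), w k a.val
      = ∑' (a : (AA k)), (k : ℝ≥0∞) * w k a.val := (ENNReal.tsum_mul_left).symm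
    _ = ∑' (a : (AA k)), ∑ u : Fin k, w k ((Φ (a, u)).val) := by
        apply tsum_congr
        intro a
        have : ∀ u : Fin k, w k ((Φ (a, u)).val) = w k a.val := by
          intro u
          simp only [hΦ, w_rot]
        rw [Finset.sum_congr rfl (fun u _ => this u)]
        rw [Finset.sum_const, Finset.card_univ, Fintype.card_fin, nsmul_eq_mul]
    _ = ∑' (a : (AA k)) (u : Fin k), w k ((Φ (a, u)).val) := by
        apply tsum_congr
        intro a
        exact (tsum_fintype _).symm
    _ = ∑' (p : (AA k) × Fin k), w k ((Φ p).val) := (ENNReal.tsum_prod).symm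
    _ ≤ ∑' (b : (BB k)), w k b.val :=
        ENNReal.tsum_comp_le_tsum_of_injective hinj (fun b => w k b.val)



/-! ### Evaluating the cycle sum -/

lemma BB_finset (k : ℕ) (hk : 1 ≤ k) :
    BB k = ↑(Finset.piAntidiag (Finset.univ : Finset (Fin k)) (k-1)) := by
  ext b
  have e : Finset.univ.sum b = ∑ j, b j := rfl
  constructor
  · intro h
    rw [Finset.mem_coe, Finset.mem_piAntidiag]
    have h' : (∑ j, b j) + 1 = k := h
    exact ⟨by omega, fun i _ => Finset.mem_univ i⟩
  · intro h
    rw [Finset.mem_coe, Finset.mem_piAntidiag] at h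
    show (∑ j, b j) + 1 = k
    have h' := h.1
    omega

lemma real_BB (k m : ℕ) :
    ∑ b ∈ Finset.piAntidiag (Finset.univ : Finset (Fin k)) m,
      ∏ j, (Real.exp (-1) / (b j).factorial)
      = Real.exp (-(k:ℝ)) * k^m / m.factorial := by
  have hterm : ∀ b ∈ Finset.piAntidiag (Finset.univ : Finset (Fin k)) m,
      ∏ j, (Real.exp (-1) / (b j).factorial)
        = Real.exp (-(k:ℝ)) / m.factorial * (Nat.multinomial Finset.univ b : ℝ) := by
    intro b hb
    rw [Finset.mem_piAntidiag] at hb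
    have hsum : ∑ j, b j = m := hb.1
    have hspec := Nat.multinomial_spec (Finset.univ : Finset (Fin k)) b
    rw [hsum] at hspec
    have hprodpos : (0:ℝ) < ∏ j, ((b j).factorial : ℝ) := by
      apply Finset.prod_pos
      intro j _
      exact_mod_cast Nat.factorial_pos _
    have hspecR : (∏ j, ((b j).factorial :ℝ)) * (Nat.multinomial Finset.univ b : ℝ)
        = (m.factorial : ℝ) := by
      rw [← Nat.cast_prod, ← Nat.cast_mul, hspec]
    have hexp : ∏ _j : Fin k, Real.exp (-1) = Real.exp (-(k:ℝ)) := by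
      rw [Finset.prod_const, Finset.card_univ, Fintype.card_fin,
        ← Real.exp_nat_mul]
      norm_num
    rw [Finset.prod_div_distrib, hexp, div_mul_eq_mul_div,
      div_eq_div_iff (ne_of_gt hprodpos) (by positivity : ((m.factorial:ℝ)) ≠ 0)]
    linear_combination Real.exp (-(k:ℝ)) * hspecR.symm
  rw [Finset.sum_congr rfl hterm, ← Finset.mul_sum]
  have hmult : ∑ b ∈ Finset.piAntidiag (Finset.univ : Finset (Fin k)) m,
      (Nat.multinomial Finset.univ b : ℝ) = (k:ℝ)^m := by
    have h := Finset.sum_pow_eq_sum_piAntidiag (Finset.univ : Finset (Fin k))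
      (fun _ => (1:ℝ)) m
    simp only [Finset.sum_const, Finset.card_univ, Fintype.card_fin, nsmul_eq_mul,
      mul_one, one_pow, Finset.prod_const_one] at h
    rw [← h]
  rw [hmult]
  ring

lemma BB_tsum (k : ℕ) (hk : 1 ≤ k) :
    ∑' (b : (BB k)), w k b.val
      = ENNReal.ofReal (Real.exp (-(k:ℝ)) * k^(k-1) / (k-1).factorial) := by
  rw [BB_finset k hk]
  rw [Finset.tsum_subtype' (Finset.piAntidiag (Finset.univ : Finset (Fin k)) (k-1))
    (fun b => w k b)]
  rw [← real_BB k (k-1)]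
  rw [ENNReal.ofReal_sum_of_nonneg]
  · apply Finset.sum_congr rfl
    intro b _
    rw [w, ← ENNReal.ofReal_prod_of_nonneg]
    intro j _
    positivity
  · intro b _
    apply Finset.prod_nonneg
    intro j _
    positivity

/-! ### Stirling bound -/

lemma stirlingSeq_ge (n : ℕ) : Real.sqrt π ≤ Stirling.stirlingSeq (n+1) := by
  have h1 : Filter.Tendsto (fun m => Stirling.stirlingSeq (m+1)) atTop (nhds (√π)) :=
    Stirling.tendsto_stirlingSeq_sqrt_pi.comp (tendsto_add_atTop_nat 1)
  exact Stirling.stirlingSeq'_antitone.le_of_tendsto h1 n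

lemma factorial_lower (k : ℕ) (hk : 1 ≤ k) :
    2 * √(k:ℝ) * ((k:ℝ)^k / Real.exp 1 ^ k) ≤ (k.factorial : ℝ) := by
  obtain ⟨n, rfl⟩ : ∃ n, k = n + 1 := ⟨k - 1, by omega⟩
  have h := stirlingSeq_ge n
  rw [Stirling.stirlingSeq] at h
  have hpos : 0 < √(2 * ((n+1:ℕ):ℝ)) * (((n+1:ℕ):ℝ) / Real.exp 1) ^ ((n:ℕ)+1) := by
    have : (0:ℝ) < ((n+1:ℕ):ℝ) := by positivity
    positivity
  rw [le_div_iff₀ hpos] at h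
  calc 2 * √((n+1:ℕ):ℝ) * (((n+1:ℕ):ℝ)^(n+1) / Real.exp 1 ^ (n+1))
      ≤ √π * (√(2 * ((n+1:ℕ):ℝ)) * (((n+1:ℕ):ℝ) / Real.exp 1) ^ (n + 1)) := by
        have e1 : √(2 * ((n+1:ℕ):ℝ)) = √2 * √((n+1:ℕ):ℝ) := Real.sqrt_mul (by norm_num) _
        have e2 : (((n+1:ℕ):ℝ) / Real.exp 1) ^ (n + 1)
            = ((n+1:ℕ):ℝ)^(n+1) / Real.exp 1 ^ (n+1) := div_pow _ _ _
        rw [e1, e2]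
        have h2 : (2:ℝ) ≤ √π * √2 := by
          rw [← Real.sqrt_mul (by positivity)]
          have : (4:ℝ) ≤ π * 2 := by nlinarith [Real.pi_gt_three]
          calc (2:ℝ) = √4 := by
                rw [show (4:ℝ) = 2^2 by norm_num, Real.sqrt_sq (by norm_num)]
          _ ≤ √(π * 2) := Real.sqrt_le_sqrt this
        have h3 : (0:ℝ) ≤ √((n+1:ℕ):ℝ) * (((n+1:ℕ):ℝ)^(n+1) / Real.exp 1 ^ (n+1)) := by
          positivity
        calc 2 * √((n+1:ℕ):ℝ) * (((n+1:ℕ):ℝ)^(n+1) / Real.exp 1 ^ (n+1))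
            = 2 * (√((n+1:ℕ):ℝ) * (((n+1:ℕ):ℝ)^(n+1) / Real.exp 1 ^ (n+1))) := by ring
          _ ≤ (√π * √2) * (√((n+1:ℕ):ℝ) * (((n+1:ℕ):ℝ)^(n+1) / Real.exp 1 ^ (n+1))) := by
              apply mul_le_mul_of_nonneg_right h2 h3
          _ = √π * (√2 * √((n+1:ℕ):ℝ) * (((n+1:ℕ):ℝ)^(n+1) / Real.exp 1 ^ (n+1))) := by
              ring
    _ ≤ ((n+1).factorial : ℝ) := h

lemma pmf_real_bound (k : ℕ) (hk : 1 ≤ k) :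
    Real.exp (-(k:ℝ)) * k^(k-1) / (k-1).factorial ≤ 1 / (2 * √(k:ℝ)) := by
  have hf := factorial_lower k hk
  have hkR : (0:ℝ) < (k:ℝ) := by exact_mod_cast hk
  have hfactpos : (0:ℝ) < ((k-1).factorial : ℝ) := by exact_mod_cast Nat.factorial_pos _
  have hsq : (0:ℝ) < √(k:ℝ) := Real.sqrt_pos.2 hkR
  rw [div_le_div_iff₀ hfactpos (by positivity)]
  -- goal : exp(-k) * k^(k-1) * (2√k) ≤ (k-1)! * 1  — multiply by k
  have hmul : Real.exp (-(k:ℝ)) * (k:ℝ)^(k-1) * (2 * √(k:ℝ)) * (k:ℝ)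
      ≤ ((k-1).factorial : ℝ) * (k:ℝ) := by
    have hfac : ((k-1).factorial : ℝ) * (k:ℝ) = (k.factorial : ℝ) := by
      rw [← Nat.cast_mul]
      congr 1
      rw [mul_comm]
      exact Nat.mul_factorial_pred (by omega)
    rw [hfac]
    have hpow : (k:ℝ)^(k-1) * (k:ℝ) = (k:ℝ)^k := by
      rw [← pow_succ]
      congr 1
      omega
    have hexp : Real.exp (-(k:ℝ)) = (Real.exp 1 ^ k)⁻¹ := by
      rw [← Real.exp_nat_mul, mul_one, ← Real.exp_neg]
    calc Real.exp (-(k:ℝ)) * (k:ℝ)^(k-1) * (2 * √(k:ℝ)) * (k:ℝ)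
        = 2 * √(k:ℝ) * ((k:ℝ)^(k-1) * (k:ℝ) * Real.exp (-(k:ℝ))) := by ring
      _ = 2 * √(k:ℝ) * ((k:ℝ)^k / Real.exp 1 ^ k) := by
          rw [hpow, hexp]; ring
      _ ≤ (k.factorial : ℝ) := hf
  nlinarith [hmul, hkR]

/-- The final combinatorial bound:
`k * (Borel pmf dominating sum) ≤ 1/(2√k)`. -/
lemma AA_final (k : ℕ) (hk : 1 ≤ k) :
    (k : ℝ≥0∞) * ∑' (a : (AA k)), w k a.val ≤ ENNReal.ofReal (1 / (2 * √(k:ℝ))) := by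
  calc (k : ℝ≥0∞) * ∑' (a : (AA k)), w k a.val
      ≤ ∑' (b : (BB k)), w k b.val := cycle_bound k
    _ = ENNReal.ofReal (Real.exp (-(k:ℝ)) * k^(k-1) / (k-1).factorial) := BB_tsum k hk
    _ ≤ ENNReal.ofReal (1 / (2 * √(k:ℝ))) := ENNReal.ofReal_le_ofReal (pmf_real_bound k hk)





/-! ### Real analysis helpers -/

lemma sqrt_diff_eq (j : ℝ) (hj : 0 ≤ j) :
    √(j+1) - √j = 1 / (√(j+1) + √j) := by
  have h1 : √(j+1) ^ 2 = j + 1 := Real.sq_sqrt (by linarith)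
  have h2 : √j ^ 2 = j := Real.sq_sqrt hj
  have h3 : 0 < √(j+1) + √j := by
    have := Real.sqrt_nonneg j
    have : 0 < √(j+1) := Real.sqrt_pos.2 (by linarith)
    linarith [Real.sqrt_nonneg j]
  field_simp
  nlinarith

lemma step_upper (j : ℝ) (hj : 0 ≤ j) :
    1 / (2 * √(j+1)) ≤ √(j+1) - √j := by
  rw [sqrt_diff_eq j hj]
  have h0 : 0 < √(j+1) := Real.sqrt_pos.2 (by linarith)
  have h1 : √j ≤ √(j+1) := Real.sqrt_le_sqrt (by linarith)
  have h3 : 0 < √(j+1) + √j := by linarith [Real.sqrt_nonneg j]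
  apply one_div_le_one_div_of_le h3
  linarith

lemma step_lower (j : ℝ) (hj : 1 ≤ j) :
    1 / (2 * (j+1) * √(j+1)) ≤ 1 / √j - 1 / √(j+1) := by
  have hj0 : (0:ℝ) ≤ j := by linarith
  have h0 : 0 < √(j+1) := Real.sqrt_pos.2 (by linarith)
  have h0' : 0 < √j := Real.sqrt_pos.2 (by linarith)
  have h1 : √j ≤ √(j+1) := Real.sqrt_le_sqrt (by linarith)
  have hsq : √(j+1) ^ 2 = j + 1 := Real.sq_sqrt (by linarith)
  have hsq' : √j ^ 2 = j := Real.sq_sqrt hj0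
  have key : 1 / √j - 1 / √(j+1) = (√(j+1) - √j) / (√j * √(j+1)) := by
    field_simp
  rw [key, sqrt_diff_eq j hj0]
  rw [div_div]
  apply one_div_le_one_div_of_le
  · positivity
  · have e1 : √j * √(j+1) ≤ (j+1) := by nlinarith
    have e2 : √(j+1) + √j ≤ 2 * √(j+1) := by linarith
    have e3 : 0 < (√(j+1) + √j) := by linarith
    calc (√(j+1) + √j) * (√j * √(j+1)) ≤ 2 * √(j+1) * (j+1) := by nlinarith
    _ = 2 * (j+1) * √(j+1) := by ring

/-- partial-sum bound: `∑_{k=1}^{M} 1/(2√k) ≤ √M`. -/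
lemma sum_inv_sqrt_le (M : ℕ) :
    ∑ k ∈ Finset.Icc 1 M, 1 / (2 * √(k:ℝ)) ≤ √(M:ℝ) := by
  have h : ∀ k ∈ Finset.Icc 1 M, 1 / (2 * √(k:ℝ)) ≤ √(k:ℝ) - √((k:ℝ) - 1) := by
    intro k hk
    simp only [Finset.mem_Icc] at hk
    have hk1 : 1 ≤ k := hk.1
    have : ((k:ℝ) - 1) + 1 = (k:ℝ) := by ring
    have h0 : (0:ℝ) ≤ (k:ℝ) - 1 := by
      have : (1:ℝ) ≤ (k:ℝ) := by exact_mod_cast hk1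
      linarith
    have := step_upper ((k:ℝ) - 1) h0
    rw [show ((k:ℝ) - 1) + 1 = (k:ℝ) by ring] at this
    exact this
  calc ∑ k ∈ Finset.Icc 1 M, 1 / (2 * √(k:ℝ))
      ≤ ∑ k ∈ Finset.Icc 1 M, (√(k:ℝ) - √((k:ℝ) - 1)) := Finset.sum_le_sum h
    _ = ∑ j ∈ Finset.range M, (√(((1+j:ℕ)):ℝ) - √((((1+j:ℕ)):ℝ) - 1)) := by
        rw [show Finset.Icc 1 M = Finset.Ico 1 (M+1) by rw [Finset.Ico_add_one_right_eq_Icc],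
          Finset.sum_Ico_eq_sum_range]
        simp
    _ = ∑ j ∈ Finset.range M, (√((j+1:ℕ):ℝ) - √((j:ℕ):ℝ)) := by
        apply Finset.sum_congr rfl
        intro j _
        push_cast
        ring_nf
    _ = √((M:ℕ):ℝ) - √((0:ℕ):ℝ) := Finset.sum_range_sub (fun n => √((n:ℕ):ℝ)) M
    _ ≤ √(M:ℝ) := by simp

/-- tail bound: `∑_{d<D} 1/(2 (M+1+d) √(M+1+d)) ≤ 1/√M` for `M ≥ 1`. -/
lemma sum_tail_le (M : ℕ) (hM : 1 ≤ M) (D : ℕ) :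
    ∑ d ∈ Finset.range D, 1 / (2 * ((M+1+d : ℕ):ℝ) * √((M+1+d : ℕ):ℝ)) ≤ 1 / √(M:ℝ) := by
  have h : ∀ d ∈ Finset.range D,
      1 / (2 * ((M+1+d : ℕ):ℝ) * √((M+1+d : ℕ):ℝ))
        ≤ 1 / √((M+d:ℕ):ℝ) - 1 / √((M+d+1:ℕ):ℝ) := by
    intro d _
    have h1 : (1:ℝ) ≤ ((M+d:ℕ):ℝ) := by
      have : 1 ≤ M + d := le_trans hM (Nat.le_add_right _ _)
      exact_mod_cast this
    have := step_lower ((M+d:ℕ):ℝ) h1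
    have e : ((M+d:ℕ):ℝ) + 1 = ((M+1+d:ℕ):ℝ) := by push_cast; ring
    rw [e] at this
    have e2 : ((M+d+1:ℕ):ℝ) = ((M+1+d:ℕ):ℝ) := by push_cast; ring
    rw [e2]
    exact this
  calc ∑ d ∈ Finset.range D, 1 / (2 * ((M+1+d : ℕ):ℝ) * √((M+1+d : ℕ):ℝ))
      ≤ ∑ d ∈ Finset.range D, (1 / √((M+d:ℕ):ℝ) - 1 / √((M+d+1:ℕ):ℝ)) :=
        Finset.sum_le_sum h
    _ = 1 / √((M+0:ℕ):ℝ) - 1 / √((M+D:ℕ):ℝ) :=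
        Finset.sum_range_sub' (fun d => 1 / √((M+d:ℕ):ℝ)) D
    _ ≤ 1 / √(M:ℝ) := by
        have : 0 ≤ 1 / √((M+D:ℕ):ℝ) := by positivity
        simp only [Nat.add_zero]
        linarith


end GWaux
/-- If `X 1, X 2, …` are i.i.d. copies of the total progeny of a critical
Galton–Watson tree with `Poisson(1)` offspring and `S n = X 1 + ⋯ + X n`, then
`∑ 1/√(S n) = ∞` almost surely.

Each copy `X i` of the total progeny is formalized via the Łukasiewicz-path
(Dwass/Otter) characterization from its own i.i.d. `Poisson(1)` offspring
sequence `ξ (i, ·)`, with the whole array `ξ` i.i.d. -/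
theorem sum_inv_sqrt_progeny_diverges
    {Ω : Type*} [MeasurableSpace Ω] (μ : Measure Ω) [IsProbabilityMeasure μ]
    (ξ : ℕ × ℕ → Ω → ℕ)
    (hmeas : ∀ p, Measurable (ξ p))
    (hindep : iIndepFun ξ μ)
    (hpois : ∀ p k, μ {ω | ξ p ω = k} = ENNReal.ofReal (Real.exp (-1) / k.factorial))
    (X : ℕ → Ω → ℕ)
    (hX : ∀ i ω, X i ω =
      sInf {n : ℕ | 1 ≤ n ∧ (∑ j ∈ Finset.range n, ξ (i, j) ω) + 1 = n})
    (S : ℕ → Ω → ℕ)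
    (hS : ∀ n ω, S n ω = ∑ i ∈ Finset.Icc 1 n, X i ω) :
    ∀ᵐ ω ∂μ, Tendsto
      (fun N => ∑ n ∈ Finset.Icc 1 N, 1 / Real.sqrt (S n ω)) atTop atTop := by
  classical
  -- ## Step 1 : the event `X i = k` as a disjoint union of cylinders
  have hXset : ∀ i k, 1 ≤ k → {ω | X i ω = k}
      = ⋃ (a : GWaux.AA k), ⋂ (j : Fin k), {ω | ξ (i, j.val) ω = a.val j} := by
    intro i k hk
    ext ω
    simp only [Set.mem_setOf_eq, Set.mem_iUnion, Set.mem_iInter]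
    have hps : ∀ (b : Fin k → ℕ), (∀ j : Fin k, ξ (i, j.val) ω = b j) →
        ∀ l, l ≤ k → GWaux.psum k b l = ∑ j ∈ Finset.range l, ξ (i, j) ω := by
      intro b hb l hl
      apply Finset.sum_congr rfl
      intro j hj
      rw [Finset.mem_range] at hj
      have hjk : j < k := by omega
      simp only [GWaux.eext, dif_pos hjk]
      exact (hb ⟨j, hjk⟩).symm
    constructor
    · intro hXk
      refine ⟨⟨fun j => ξ (i, j.val) ω, ?_⟩, fun j => rfl⟩
      have hsInf : sInf {n : ℕ | 1 ≤ n ∧ (∑ j ∈ Finset.range n, ξ (i, j) ω) + 1 = n} = k := by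
        rw [← hX i ω]; exact hXk
      have hne : {n : ℕ | 1 ≤ n ∧ (∑ j ∈ Finset.range n, ξ (i, j) ω) + 1 = n}.Nonempty := by
        by_contra hemp
        rw [Set.not_nonempty_iff_eq_empty] at hemp
        rw [hemp, Nat.sInf_empty] at hsInf
        omega
      have hmem := Nat.sInf_mem hne
      rw [hsInf] at hmem
      have hpsb := hps (fun j => ξ (i, j.val) ω) (fun j => rfl)
      constructor
      · refine ⟨hk, ?_⟩
        rw [hpsb k le_rfl]
        exact hmem.2
      · rintro l hl ⟨hl1, hl2⟩
        have hlT : l ∈ {n : ℕ | 1 ≤ n ∧ (∑ j ∈ Finset.range n, ξ (i, j) ω) + 1 = n} := by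
          refine ⟨hl1, ?_⟩
          rw [← hpsb l (le_of_lt hl)]
          exact hl2
        have := Nat.sInf_le hlT
        omega
    · rintro ⟨⟨a, ha⟩, hval⟩
      have hpsb := hps a hval
      rw [hX i ω]
      have hkT : k ∈ {n : ℕ | 1 ≤ n ∧ (∑ j ∈ Finset.range n, ξ (i, j) ω) + 1 = n} := by
        refine ⟨hk, ?_⟩
        rw [← hpsb k le_rfl]
        exact ha.1.2
      have hlow : ∀ l, l < k →
          l ∉ {n : ℕ | 1 ≤ n ∧ (∑ j ∈ Finset.range n, ξ (i, j) ω) + 1 = n} := by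
        intro l hl hmem
        exact ha.2 l hl ⟨hmem.1, by rw [hpsb l (le_of_lt hl)]; exact hmem.2⟩
      refine le_antisymm (Nat.sInf_le hkT) ?_
      by_contra hcon
      push_neg at hcon
      exact hlow _ hcon (Nat.sInf_mem ⟨k, hkT⟩)
  -- ## Step 2 : measure of a cylinder
  have hcyl : ∀ i k (a : Fin k → ℕ),
      μ (⋂ (j : Fin k), {ω | ξ (i, j.val) ω = a j}) = GWaux.w k a := by
    intro i k a
    set emb : Fin k → ℕ × ℕ := fun j => (i, j.val) with hemb
    have hembinj : Function.Injective emb := by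
      intro x y h
      exact Fin.ext (congrArg Prod.snd h)
    set Sf : Finset (ℕ × ℕ) := Finset.image emb Finset.univ with hSf
    set sets : ℕ × ℕ → Set ℕ :=
      fun p => if h : p.2 < k then ({a ⟨p.2, h⟩} : Set ℕ) else Set.univ with hsets
    have hmeassets : ∀ p, p ∈ Sf → MeasurableSet (sets p) := by
      intro p _
      by_cases h : p.2 < k <;> simp [hsets, h]
    have hprod := hindep.measure_inter_preimage_eq_mul (sets := sets) Sf hmeassets
    have hint : (⋂ p ∈ Sf, ξ p ⁻¹' sets p) = ⋂ (j : Fin k), {ω | ξ (i, j.val) ω = a j} := by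
      ext ω
      simp only [Set.mem_iInter, hSf, Finset.mem_image, Finset.mem_univ, true_and,
        Set.mem_preimage, Set.mem_setOf_eq]
      constructor
      · intro h j
        have := h (emb j) ⟨j, rfl⟩
        simp only [hsets, hemb] at this
        rw [dif_pos j.isLt] at this
        simpa using this
      · rintro h p ⟨j, rfl⟩
        simp only [hsets, hemb]
        rw [dif_pos j.isLt]
        simpa using h j
    rw [hint] at hprod
    rw [hprod, Finset.prod_image (by intro x _ y _ h; exact hembinj h)]
    rw [GWaux.w]
    apply Finset.prod_congr rfl
    intro j _
    have heq : ξ (emb j) ⁻¹' sets (emb j) = {ω | ξ (i, j.val) ω = a j} := by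
      ext ω
      simp only [hsets, hemb, Set.mem_preimage, Set.mem_setOf_eq]
      rw [dif_pos j.isLt]
      simp
    rw [heq, hpois (i, j.val) (a j)]
  -- ## Step 3 : the pmf bound
  have hpmf : ∀ i (k : ℕ), 1 ≤ k →
      (k : ℝ≥0∞) * μ {ω | X i ω = k} ≤ ENNReal.ofReal (1/(2*Real.sqrt (k:ℝ))) := by
    intro i k hk
    rw [hXset i k hk]
    have hdisj : Pairwise (Function.onFun Disjoint
        (fun (a : GWaux.AA k) => ⋂ (j : Fin k), {ω | ξ (i, j.val) ω = a.val j})) := by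
      intro a a' hne
      simp only [Function.onFun]
      rw [Set.disjoint_iff]
      rintro ω ⟨h1, h2⟩
      simp only [Set.mem_iInter, Set.mem_setOf_eq] at h1 h2
      exact absurd (Subtype.ext (funext fun j => by rw [← h1 j, ← h2 j])) hne
    rw [measure_iUnion hdisj (fun a => MeasurableSet.iInter fun j =>
      (hmeas (i, j.val)) (measurableSet_singleton (a.val j)))]
    have heq : ∑' (a : GWaux.AA k), μ (⋂ (j : Fin k), {ω | ξ (i, j.val) ω = a.val j})
        = ∑' (a : GWaux.AA k), GWaux.w k a.val := tsum_congr fun a => hcyl i k a.val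
    rw [heq]
    exact GWaux.AA_final k hk
  -- measurability
  have hXmeask : ∀ i k, 1 ≤ k → MeasurableSet {ω | X i ω = k} := by
    intro i k hk
    rw [hXset i k hk]
    exact MeasurableSet.iUnion fun a =>
      MeasurableSet.iInter fun j => (hmeas (i, j.val)) (measurableSet_singleton (a.val j))
  have hXmeas : ∀ i, Measurable (X i) := by
    intro i
    apply measurable_to_countable'
    intro k
    rcases Nat.eq_zero_or_pos k with rfl | hk
    · have heq : X i ⁻¹' {0} = (⋃ (m : ℕ), {ω | X i ω = m + 1})ᶜ := by
        ext ω
        simp only [Set.mem_preimage, Set.mem_singleton_iff, Set.mem_compl_iff, Set.mem_iUnion,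
          Set.mem_setOf_eq]
        constructor
        · rintro h ⟨m, hm⟩
          omega
        · intro h
          rcases Nat.eq_zero_or_pos (X i ω) with h0 | h0
          · exact h0
          · exact absurd ⟨X i ω - 1, by omega⟩ h
      rw [heq]
      exact (MeasurableSet.iUnion fun m => hXmeask i (m+1) (by omega)).compl
    · exact hXmeask i k hk
  have hSmeas : ∀ n, Measurable (S n) := by
    intro n
    have : S n = fun ω => ∑ i ∈ Finset.Icc 1 n, X i ω := funext fun ω => hS n ω
    rw [this]
    exact Finset.measurable_sum _ fun i _ => hXmeas i
  -- ## Step 4 : tail bound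
  have htail : ∀ i (M : ℕ), 1 ≤ M →
      μ {ω | M < X i ω} ≤ ENNReal.ofReal (1/Real.sqrt (M:ℝ)) := by
    intro i M hM
    have hsub : {ω | M < X i ω} = ⋃ (d : ℕ), {ω | X i ω = M + 1 + d} := by
      ext ω
      simp only [Set.mem_setOf_eq, Set.mem_iUnion]
      constructor
      · intro h
        exact ⟨X i ω - M - 1, by omega⟩
      · rintro ⟨d, hd⟩
        omega
    rw [hsub]
    calc μ (⋃ d, {ω | X i ω = M + 1 + d}) ≤ ∑' (d : ℕ), μ {ω | X i ω = M + 1 + d} :=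
          measure_iUnion_le _
      _ ≤ ∑' (d : ℕ), ENNReal.ofReal (1/(2*((M+1+d:ℕ):ℝ)*Real.sqrt ((M+1+d:ℕ):ℝ))) := by
          apply ENNReal.tsum_le_tsum
          intro d
          have h1 := hpmf i (M+1+d) (by omega)
          rw [mul_comm] at h1
          have hk0 : ((M+1+d : ℕ) : ℝ≥0∞) ≠ 0 := by
            simp only [ne_eq, Nat.cast_eq_zero]
            omega
          have hk0' : ((M+1+d : ℕ) : ℝ≥0∞) ≠ ⊤ := ENNReal.natCast_ne_top _
          rw [← ENNReal.le_div_iff_mul_le (Or.inl hk0) (Or.inl hk0')] at h1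
          refine le_trans h1 ?_
          have hp : (0:ℝ) < ((M+1+d:ℕ):ℝ) := by exact_mod_cast (by omega : 0 < M+1+d)
          rw [show ((M+1+d : ℕ) : ℝ≥0∞) = ENNReal.ofReal ((M+1+d:ℕ):ℝ) by
            rw [ENNReal.ofReal_natCast]]
          rw [← ENNReal.ofReal_div_of_pos hp]
          apply ENNReal.ofReal_le_ofReal
          rw [div_div]
          apply le_of_eq
          congr 1
          ring
      _ ≤ ENNReal.ofReal (1/Real.sqrt (M:ℝ)) := by
          rw [ENNReal.tsum_eq_iSup_sum]
          apply iSup_le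
          intro F
          obtain ⟨D, hD⟩ := Finset.exists_nat_subset_range F
          calc ∑ d ∈ F, ENNReal.ofReal (1/(2*((M+1+d:ℕ):ℝ)*Real.sqrt ((M+1+d:ℕ):ℝ)))
              ≤ ∑ d ∈ Finset.range D,
                  ENNReal.ofReal (1/(2*((M+1+d:ℕ):ℝ)*Real.sqrt ((M+1+d:ℕ):ℝ))) :=
                Finset.sum_le_sum_of_subset hD
            _ = ENNReal.ofReal
                  (∑ d ∈ Finset.range D, 1/(2*((M+1+d:ℕ):ℝ)*Real.sqrt ((M+1+d:ℕ):ℝ))) :=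
                (ENNReal.ofReal_sum_of_nonneg (fun d _ => by positivity)).symm
            _ ≤ ENNReal.ofReal (1/Real.sqrt (M:ℝ)) :=
                ENNReal.ofReal_le_ofReal (GWaux.sum_tail_le M hM D)
  -- ## Step 5 : the main estimate
  have hAN : ∀ C N, 1 ≤ C → 1 ≤ N →
      μ {ω | ¬ (S (2*N) ω ≤ C*(2*N)^2)} ≤ ENNReal.ofReal (2/Real.sqrt (C:ℝ)) := by
    intro C N hC hN
    set n : ℕ := 2*N with hn
    have hn1 : 1 ≤ n := by omega
    set M : ℕ := C*(2*N)^2 with hM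
    have hM1 : 1 ≤ M := Nat.mul_pos hC (by positivity)
    -- basic real facts about M
    have hMR : ((M:ℕ):ℝ) = (C:ℝ) * ((n:ℕ):ℝ)^2 := by
      rw [hM, hn]
      push_cast
      ring
    have hCpos : (0:ℝ) < (C:ℝ) := by exact_mod_cast hC
    have hnpos : (0:ℝ) < ((n:ℕ):ℝ) := by exact_mod_cast hn1
    have hsqrtM : Real.sqrt ((M:ℕ):ℝ) = Real.sqrt (C:ℝ) * ((n:ℕ):ℝ) := by
      rw [hMR, Real.sqrt_mul (le_of_lt hCpos), Real.sqrt_sq (le_of_lt hnpos)]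
    have hMRpos : (0:ℝ) < ((M:ℕ):ℝ) := by exact_mod_cast hM1
    have hsqrtMpos : (0:ℝ) < Real.sqrt ((M:ℕ):ℝ) := Real.sqrt_pos.2 hMRpos
    -- the truncated variables
    set Y : ℕ → Ω → ℝ≥0∞ := fun i ω => ∑ k ∈ Finset.Icc 1 M,
      Set.indicator {ω' | X i ω' = k} (fun _ => (k:ℝ≥0∞)) ω with hY
    have hYmeas : ∀ i, Measurable (Y i) := fun i =>
      Finset.measurable_sum _ fun k hk =>
        measurable_const.indicator (hXmeask i k (Finset.mem_Icc.1 hk).1)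
    have hYint : ∀ i, ∫⁻ ω, Y i ω ∂μ ≤ ENNReal.ofReal (Real.sqrt ((M:ℕ):ℝ)) := by
      intro i
      simp only [hY]
      rw [lintegral_finset_sum _ (fun k hk =>
        measurable_const.indicator (hXmeask i k (Finset.mem_Icc.1 hk).1))]
      have hterm : ∀ k ∈ Finset.Icc 1 M,
          ∫⁻ ω, Set.indicator {ω' | X i ω' = k} (fun _ => (k:ℝ≥0∞)) ω ∂μ
            ≤ ENNReal.ofReal (1/(2*Real.sqrt (k:ℝ))) := by
        intro k hk
        rw [lintegral_indicator_const (hXmeask i k (Finset.mem_Icc.1 hk).1)]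
        exact hpmf i k (Finset.mem_Icc.1 hk).1
      calc ∑ k ∈ Finset.Icc 1 M,
            ∫⁻ ω, Set.indicator {ω' | X i ω' = k} (fun _ => (k:ℝ≥0∞)) ω ∂μ
          ≤ ∑ k ∈ Finset.Icc 1 M, ENNReal.ofReal (1/(2*Real.sqrt (k:ℝ))) :=
            Finset.sum_le_sum hterm
        _ = ENNReal.ofReal (∑ k ∈ Finset.Icc 1 M, 1/(2*Real.sqrt (k:ℝ))) :=
            (ENNReal.ofReal_sum_of_nonneg (fun k _ => by positivity)).symm
        _ ≤ ENNReal.ofReal (Real.sqrt ((M:ℕ):ℝ)) :=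
            ENNReal.ofReal_le_ofReal (GWaux.sum_inv_sqrt_le M)
    -- pointwise inclusion
    have hincl : {ω | ¬ (S n ω ≤ M)} ⊆
        (⋃ i ∈ Finset.Icc 1 n, {ω | M < X i ω})
          ∪ {ω | ((M:ℝ≥0∞)+1) ≤ ∑ i ∈ Finset.Icc 1 n, Y i ω} := by
      intro ω hω
      simp only [Set.mem_setOf_eq, not_le] at hω
      by_cases hbig : ∃ i ∈ Finset.Icc 1 n, M < X i ω
      · left
        obtain ⟨i, hi, hXi⟩ := hbig
        exact Set.mem_biUnion hi hXi
      · right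
        push_neg at hbig
        have hYX : ∀ i ∈ Finset.Icc 1 n, Y i ω = (X i ω : ℝ≥0∞) := by
          intro i hi
          simp only [hY]
          rcases Nat.eq_zero_or_pos (X i ω) with h0 | h0
          · rw [h0, Nat.cast_zero]
            apply Finset.sum_eq_zero
            intro k hk
            rw [Set.indicator_of_notMem]
            simp only [Set.mem_setOf_eq]
            have := (Finset.mem_Icc.1 hk).1
            omega
          · have hmemk : X i ω ∈ Finset.Icc 1 M := Finset.mem_Icc.2 ⟨h0, hbig i hi⟩
            rw [Finset.sum_eq_single_of_mem (X i ω) hmemk]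
            · rw [Set.indicator_of_mem]
              exact rfl
            · intro k hk hne
              apply Set.indicator_of_notMem
              simp only [Set.mem_setOf_eq]
              omega
        have hsum : ∑ i ∈ Finset.Icc 1 n, Y i ω = ((S n ω : ℕ) : ℝ≥0∞) := by
          rw [hS n ω, Nat.cast_sum]
          exact Finset.sum_congr rfl hYX
        simp only [Set.mem_setOf_eq]
        rw [hsum]
        have hle : (M+1 : ℕ) ≤ S n ω := hω
        calc ((M:ℝ≥0∞)+1) = ((M+1 : ℕ) : ℝ≥0∞) := by push_cast; ring
          _ ≤ ((S n ω : ℕ) : ℝ≥0∞) := Nat.cast_le.2 hle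
    -- the Markov part
    have hM0 : ((M:ℝ≥0∞)+1) ≠ 0 := by simp
    have hMtop : ((M:ℝ≥0∞)+1) ≠ ⊤ := by
      simp [ENNReal.natCast_ne_top]
    have hmarkov : μ {ω | ((M:ℝ≥0∞)+1) ≤ ∑ i ∈ Finset.Icc 1 n, Y i ω}
        ≤ ENNReal.ofReal (((n:ℕ):ℝ) / Real.sqrt ((M:ℕ):ℝ)) := by
      have hfm : Measurable (fun ω => ∑ i ∈ Finset.Icc 1 n, Y i ω) :=
        Finset.measurable_sum _ fun i _ => hYmeas i
      have h1 := mul_meas_ge_le_lintegral (μ := μ) hfm ((M:ℝ≥0∞)+1)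
      have h2 : μ {ω | ((M:ℝ≥0∞)+1) ≤ ∑ i ∈ Finset.Icc 1 n, Y i ω}
          ≤ (∫⁻ ω, ∑ i ∈ Finset.Icc 1 n, Y i ω ∂μ) / ((M:ℝ≥0∞)+1) := by
        rw [ENNReal.le_div_iff_mul_le (Or.inl hM0) (Or.inl hMtop), mul_comm]
        exact h1
      refine le_trans h2 ?_
      have h3 : (∫⁻ ω, ∑ i ∈ Finset.Icc 1 n, Y i ω ∂μ)
          ≤ (n:ℝ≥0∞) * ENNReal.ofReal (Real.sqrt ((M:ℕ):ℝ)) := by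
        rw [lintegral_finset_sum _ (fun i _ => hYmeas i)]
        calc ∑ i ∈ Finset.Icc 1 n, ∫⁻ ω, Y i ω ∂μ
            ≤ ∑ _i ∈ Finset.Icc 1 n, ENNReal.ofReal (Real.sqrt ((M:ℕ):ℝ)) :=
              Finset.sum_le_sum fun i _ => hYint i
          _ = (n:ℝ≥0∞) * ENNReal.ofReal (Real.sqrt ((M:ℕ):ℝ)) := by
              rw [Finset.sum_const, Nat.card_Icc]
              simp [nsmul_eq_mul]
      calc (∫⁻ ω, ∑ i ∈ Finset.Icc 1 n, Y i ω ∂μ) / ((M:ℝ≥0∞)+1)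
          ≤ ((n:ℝ≥0∞) * ENNReal.ofReal (Real.sqrt ((M:ℕ):ℝ))) / ((M:ℕ):ℝ≥0∞) :=
            ENNReal.div_le_div h3 (by exact_mod_cast le_self_add)
        _ = ENNReal.ofReal (((n:ℕ):ℝ) * Real.sqrt ((M:ℕ):ℝ)) / ENNReal.ofReal ((M:ℕ):ℝ) := by
            rw [← ENNReal.ofReal_natCast n, ← ENNReal.ofReal_natCast M,
              ← ENNReal.ofReal_mul (by positivity)]
        _ = ENNReal.ofReal (((n:ℕ):ℝ) * Real.sqrt ((M:ℕ):ℝ) / ((M:ℕ):ℝ)) := by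
            rw [ENNReal.ofReal_div_of_pos hMRpos]
        _ = ENNReal.ofReal (((n:ℕ):ℝ) / Real.sqrt ((M:ℕ):ℝ)) := by
            congr 1
            rw [div_eq_div_iff (ne_of_gt hMRpos) (ne_of_gt hsqrtMpos)]
            have hms := Real.mul_self_sqrt (le_of_lt hMRpos)
            nlinarith [hms]
    -- the union part
    have hunion : μ (⋃ i ∈ Finset.Icc 1 n, {ω | M < X i ω})
        ≤ ENNReal.ofReal (((n:ℕ):ℝ) / Real.sqrt ((M:ℕ):ℝ)) := by
      calc μ (⋃ i ∈ Finset.Icc 1 n, {ω | M < X i ω})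
          ≤ ∑ i ∈ Finset.Icc 1 n, μ {ω | M < X i ω} := measure_biUnion_finset_le _ _
        _ ≤ ∑ _i ∈ Finset.Icc 1 n, ENNReal.ofReal (1/Real.sqrt ((M:ℕ):ℝ)) :=
            Finset.sum_le_sum fun i _ => htail i M hM1
        _ = (n:ℝ≥0∞) * ENNReal.ofReal (1/Real.sqrt ((M:ℕ):ℝ)) := by
            rw [Finset.sum_const, Nat.card_Icc]
            simp [nsmul_eq_mul]
        _ = ENNReal.ofReal (((n:ℕ):ℝ) * (1/Real.sqrt ((M:ℕ):ℝ))) := by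
            rw [← ENNReal.ofReal_natCast n, ← ENNReal.ofReal_mul (by positivity)]
        _ = ENNReal.ofReal (((n:ℕ):ℝ) / Real.sqrt ((M:ℕ):ℝ)) := by
            rw [mul_one_div]
    -- put everything together
    calc μ {ω | ¬ (S n ω ≤ M)}
        ≤ μ ((⋃ i ∈ Finset.Icc 1 n, {ω | M < X i ω})
            ∪ {ω | ((M:ℝ≥0∞)+1) ≤ ∑ i ∈ Finset.Icc 1 n, Y i ω}) := measure_mono hincl
      _ ≤ μ (⋃ i ∈ Finset.Icc 1 n, {ω | M < X i ω})
            + μ {ω | ((M:ℝ≥0∞)+1) ≤ ∑ i ∈ Finset.Icc 1 n, Y i ω} := measure_union_le _ _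
      _ ≤ ENNReal.ofReal (((n:ℕ):ℝ) / Real.sqrt ((M:ℕ):ℝ))
            + ENNReal.ofReal (((n:ℕ):ℝ) / Real.sqrt ((M:ℕ):ℝ)) := add_le_add hunion hmarkov
      _ = ENNReal.ofReal (((n:ℕ):ℝ) / Real.sqrt ((M:ℕ):ℝ)
            + ((n:ℕ):ℝ) / Real.sqrt ((M:ℕ):ℝ)) := (ENNReal.ofReal_add (by positivity) (by positivity)).symm
      _ = ENNReal.ofReal (2/Real.sqrt (C:ℝ)) := by
          congr 1
          rw [hsqrtM]
          have hsc : (0:ℝ) < Real.sqrt (C:ℝ) := Real.sqrt_pos.2 hCpos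
          field_simp
          ring
  -- ## Step 6 : infinitely-often smallness
  have hE : ∀ C, 1 ≤ C →
      μ {ω | ¬ ∀ m, ∃ N, m ≤ N ∧ S (2*N) ω ≤ C*(2*N)^2}
        ≤ ENNReal.ofReal (2/Real.sqrt (C:ℝ)) := by
    intro C hC
    set A : ℕ → Set Ω := fun N => {ω | S (2*N) ω ≤ C*(2*N)^2} with hA
    have hAmeas : ∀ N, MeasurableSet (A N) := by
      intro N
      exact (hSmeas (2*N)) measurableSet_Iic
    set D : ℕ → Set Ω := fun m => ⋂ (N : ℕ) (_ : m ≤ N), (A N)ᶜ with hD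
    have hsub : {ω | ¬ ∀ m, ∃ N, m ≤ N ∧ S (2*N) ω ≤ C*(2*N)^2} ⊆ ⋃ m, D m := by
      intro ω hω
      simp only [Set.mem_setOf_eq] at hω
      push_neg at hω
      obtain ⟨m, hm⟩ := hω
      refine Set.mem_iUnion.2 ⟨m, ?_⟩
      simp only [hD, Set.mem_iInter, Set.mem_compl_iff, hA, Set.mem_setOf_eq]
      intro N hN
      exact not_le.2 (hm N hN)
    have hDmono : Monotone D := by
      intro m m' hmm' ω hω
      simp only [hD, Set.mem_iInter] at hω ⊢
      intro N hN
      exact hω N (le_trans hmm' hN)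
    have hDbound : ∀ m, μ (D m) ≤ ENNReal.ofReal (2/Real.sqrt (C:ℝ)) := by
      intro m
      have h1 : D m ⊆ (A (max m 1))ᶜ := by
        intro ω hω
        simp only [hD, Set.mem_iInter] at hω
        exact hω (max m 1) (le_max_left _ _)
      calc μ (D m) ≤ μ ((A (max m 1))ᶜ) := measure_mono h1
        _ ≤ ENNReal.ofReal (2/Real.sqrt (C:ℝ)) := by
            have h2 := hAN C (max m 1) hC (le_max_right _ _)
            have h3 : (A (max m 1))ᶜ
                = {ω | ¬ (S (2*(max m 1)) ω ≤ C*(2*(max m 1))^2)} := by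
              rw [hA]
              exact Set.compl_setOf _
            rw [h3]
            exact h2
    calc μ {ω | ¬ ∀ m, ∃ N, m ≤ N ∧ S (2*N) ω ≤ C*(2*N)^2}
        ≤ μ (⋃ m, D m) := measure_mono hsub
      _ = ⨆ m, μ (D m) := Directed.measure_iUnion (hDmono.directed_le)
      _ ≤ ENNReal.ofReal (2/Real.sqrt (C:ℝ)) := iSup_le hDbound
  -- ## Step 7 : a.s. some individual is nonzero
  have hG : μ {ω | ¬ ∃ i, 1 ≤ i ∧ 1 ≤ X i ω} = 0 := by
    have hX1 : ∀ i ω, ξ (i, 0) ω = 0 → X i ω = 1 := by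
      intro i ω h0
      rw [hX i ω]
      have h1T : 1 ∈ {n : ℕ | 1 ≤ n ∧ (∑ j ∈ Finset.range n, ξ (i, j) ω) + 1 = n} := by
        refine ⟨le_rfl, ?_⟩
        rw [Finset.sum_range_one, h0]
      refine le_antisymm (Nat.sInf_le h1T) ?_
      exact (Nat.sInf_mem ⟨1, h1T⟩).1
    have hbound : ∀ m : ℕ, μ {ω | ¬ ∃ i, 1 ≤ i ∧ 1 ≤ X i ω}
        ≤ ENNReal.ofReal ((1 - Real.exp (-1))^m) := by
      intro m
      set emb : ℕ → ℕ × ℕ := fun i => (i, 0) with hemb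
      set Sf : Finset (ℕ × ℕ) := Finset.image emb (Finset.Icc 1 m) with hSf
      have hsub : {ω | ¬ ∃ i, 1 ≤ i ∧ 1 ≤ X i ω} ⊆ ⋂ p ∈ Sf, ξ p ⁻¹' ({0}ᶜ) := by
        intro ω hω
        simp only [Set.mem_setOf_eq] at hω
        push_neg at hω
        simp only [Set.mem_iInter, hSf, Finset.mem_image]
        rintro p ⟨i, hi, rfl⟩
        simp only [hemb, Set.mem_preimage, Set.mem_compl_iff, Set.mem_singleton_iff]
        intro h0
        have hXi1 := hX1 i ω h0
        have hi1 := (Finset.mem_Icc.1 hi).1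
        have := hω i hi1
        omega
      have hprod := hindep.measure_inter_preimage_eq_mul (sets := fun _ => ({0}ᶜ : Set ℕ)) Sf
        (fun p _ => (measurableSet_singleton 0).compl)
      have hfactor : ∀ p : ℕ × ℕ, μ (ξ p ⁻¹' ({0}ᶜ)) = ENNReal.ofReal (1 - Real.exp (-1)) := by
        intro p
        rw [Set.preimage_compl,
          measure_compl ((hmeas p) (measurableSet_singleton 0)) (measure_ne_top μ _)]
        have hpre : ξ p ⁻¹' ({0} : Set ℕ) = {ω | ξ p ω = 0} := rfl
        rw [hpre, hpois p 0]
        simp only [Nat.factorial_zero, Nat.cast_one, div_one]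
        rw [measure_univ]
        rw [← ENNReal.ofReal_one, ← ENNReal.ofReal_sub _ (le_of_lt (Real.exp_pos _))]
      have hinj : Function.Injective emb := fun a b h => congrArg Prod.fst h
      calc μ {ω | ¬ ∃ i, 1 ≤ i ∧ 1 ≤ X i ω}
          ≤ μ (⋂ p ∈ Sf, ξ p ⁻¹' ({0}ᶜ)) := measure_mono hsub
        _ = ∏ p ∈ Sf, μ (ξ p ⁻¹' ({0}ᶜ)) := hprod
        _ = ENNReal.ofReal (1 - Real.exp (-1)) ^ m := by
            rw [Finset.prod_congr rfl (fun p _ => hfactor p), Finset.prod_const]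
            congr 1
            rw [hSf, Finset.card_image_of_injective _ hinj, Nat.card_Icc]
            omega
        _ = ENNReal.ofReal ((1 - Real.exp (-1))^m) := by
            rw [← ENNReal.ofReal_pow]
            have h1 : Real.exp (-1) ≤ 1 := by
              rw [show (1:ℝ) = Real.exp 0 by simp]
              exact Real.exp_le_exp.2 (by norm_num)
            linarith
    have hc1 : (1 - Real.exp (-1)) < 1 := by
      have := Real.exp_pos (-1)
      linarith
    have hc0 : (0:ℝ) ≤ (1 - Real.exp (-1)) := by
      have h1 : Real.exp (-1) ≤ 1 := by
        rw [show (1:ℝ) = Real.exp 0 by simp]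
        exact Real.exp_le_exp.2 (by norm_num)
      linarith
    have habs : |1 - Real.exp (-1)| < 1 := by
      rw [abs_of_nonneg hc0]
      exact hc1
    have htend : Tendsto (fun m : ℕ => ENNReal.ofReal ((1 - Real.exp (-1))^m))
        atTop (nhds 0) := by
      rw [show (0:ℝ≥0∞) = ENNReal.ofReal 0 by simp]
      exact ENNReal.tendsto_ofReal (tendsto_pow_atTop_nhds_zero_of_abs_lt_one habs)
    have hle := ge_of_tendsto htend (Filter.Eventually.of_forall hbound)
    exact le_antisymm hle zero_le
  -- ## Step 8 : deterministic divergence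
  have hdet : ∀ (C : ℕ), 1 ≤ C → ∀ ω, (∃ i, 1 ≤ i ∧ 1 ≤ X i ω) →
      (∀ m, ∃ N, m ≤ N ∧ S (2*N) ω ≤ C*(2*N)^2) →
      Tendsto (fun N => ∑ n ∈ Finset.Icc 1 N, 1 / Real.sqrt (S n ω)) atTop atTop := by
    intro C hC ω hex hio
    obtain ⟨i₀, hi₀1, hi₀X⟩ := hex
    set f : ℕ → ℝ := fun N => ∑ n ∈ Finset.Icc 1 N, 1 / Real.sqrt (S n ω) with hf
    have hterm0 : ∀ n, (0:ℝ) ≤ 1 / Real.sqrt (S n ω) := fun n => by positivity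
    have hfmono : Monotone f := by
      intro a b hab
      apply Finset.sum_le_sum_of_subset_of_nonneg (Finset.Icc_subset_Icc le_rfl hab)
      intro n _ _
      exact hterm0 n
    have hSmono : ∀ a b, a ≤ b → S a ω ≤ S b ω := by
      intro a b hab
      rw [hS a ω, hS b ω]
      exact Finset.sum_le_sum_of_subset (Finset.Icc_subset_Icc le_rfl hab)
    have hCR : (0:ℝ) < Real.sqrt (C:ℝ) := Real.sqrt_pos.2 (by exact_mod_cast hC)
    set β : ℝ := 1/(2*Real.sqrt (C:ℝ)) with hβ
    have hβpos : 0 < β := by positivity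
    have hblock : ∀ N, i₀ ≤ N → 1 ≤ N → S (2*N) ω ≤ C*(2*N)^2 → f N + β ≤ f (2*N) := by
      intro N hiN hN1 hSN
      have hsplit : f (2*N) = f N + ∑ n ∈ Finset.Ioc N (2*N), 1 / Real.sqrt (S n ω) := by
        simp only [hf]
        rw [show Finset.Icc 1 (2*N) = Finset.Ioc 0 (2*N) from Finset.Icc_add_one_left_eq_Ioc 0 (2*N)]
        rw [show Finset.Icc 1 N = Finset.Ioc 0 N from Finset.Icc_add_one_left_eq_Ioc 0 N]
        exact (Finset.sum_Ioc_consecutive _ (Nat.zero_le N) (by omega)).symm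
      rw [hsplit]
      have hone : ∀ n ∈ Finset.Ioc N (2*N),
          1/(Real.sqrt (C:ℝ) * ((2*N:ℕ):ℝ)) ≤ 1 / Real.sqrt (S n ω) := by
        intro n hn
        rw [Finset.mem_Ioc] at hn
        have hlb : 1 ≤ S n ω := by
          rw [hS n ω]
          calc 1 ≤ X i₀ ω := hi₀X
            _ ≤ ∑ i ∈ Finset.Icc 1 n, X i ω :=
              Finset.single_le_sum (f := fun i => X i ω) (fun i _ => Nat.zero_le _)
                (Finset.mem_Icc.2 ⟨hi₀1, by omega⟩)
        have hub : S n ω ≤ C*(2*N)^2 := le_trans (hSmono n (2*N) (by omega)) hSN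
        have hcastub : ((S n ω : ℕ):ℝ) ≤ (C:ℝ) * ((2*N:ℕ):ℝ)^2 := by
          exact_mod_cast hub
        have hsq : Real.sqrt (S n ω) ≤ Real.sqrt (C:ℝ) * ((2*N:ℕ):ℝ) := by
          calc Real.sqrt (S n ω) ≤ Real.sqrt ((C:ℝ) * ((2*N:ℕ):ℝ)^2) :=
                Real.sqrt_le_sqrt hcastub
            _ = Real.sqrt (C:ℝ) * ((2*N:ℕ):ℝ) := by
                rw [Real.sqrt_mul (by positivity), Real.sqrt_sq (by positivity)]
        have hpos : (0:ℝ) < Real.sqrt (S n ω) := Real.sqrt_pos.2 (by exact_mod_cast hlb)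
        exact one_div_le_one_div_of_le hpos hsq
      have hcard : (Finset.Ioc N (2*N)).card = N := by
        rw [Nat.card_Ioc]
        omega
      have hsum : (N:ℝ) * (1/(Real.sqrt (C:ℝ) * ((2*N:ℕ):ℝ)))
          ≤ ∑ n ∈ Finset.Ioc N (2*N), 1 / Real.sqrt (S n ω) := by
        have hh := Finset.card_nsmul_le_sum (Finset.Ioc N (2*N)) _ _ hone
        rw [hcard] at hh
        simpa [nsmul_eq_mul] using hh
      have hval : (N:ℝ) * (1/(Real.sqrt (C:ℝ) * ((2*N:ℕ):ℝ))) = β := by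
        rw [hβ]
        have hNpos : (0:ℝ) < (N:ℝ) := by exact_mod_cast hN1
        rw [show ((2*N:ℕ):ℝ) = 2*(N:ℝ) by push_cast; ring]
        field_simp
      have hsum' : β ≤ ∑ n ∈ Finset.Ioc N (2*N), 1 / Real.sqrt (S n ω) := by
        rw [← hval]
        exact hsum
      linarith
    have hiter : ∀ r : ℕ, ∃ m, (r:ℝ) * β ≤ f m := by
      intro r
      induction r with
      | zero => exact ⟨0, by norm_num [hf]⟩
      | succ r ih =>
        obtain ⟨m, hm⟩ := ih
        obtain ⟨N, hN, hSN⟩ := hio (max (max m i₀) 1)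
        have hble := hblock N
          (le_trans (le_trans (le_max_right m i₀) (le_max_left _ 1)) hN)
          (le_trans (le_max_right _ 1) hN) hSN
        refine ⟨2*N, ?_⟩
        have hfm : f m ≤ f N :=
          hfmono (le_trans (le_trans (le_max_left m i₀) (le_max_left _ 1)) hN)
        push_cast
        linarith
    apply tendsto_atTop_atTop_of_monotone hfmono
    intro b
    obtain ⟨r, hr⟩ := exists_nat_ge (b / β)
    obtain ⟨m, hm⟩ := hiter r
    refine ⟨m, ?_⟩
    have hb : b ≤ (r:ℝ) * β := by
      rw [mul_comm]
      exact le_trans ((div_le_iff₀ hβpos).1 hr) (le_of_eq (mul_comm _ _))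
    linarith
  -- ## Step 9 : conclusion
  rw [ae_iff]
  have hbad : ∀ j : ℕ,
      μ {ω | ¬ Tendsto (fun N => ∑ n ∈ Finset.Icc 1 N, 1 / Real.sqrt (S n ω)) atTop atTop}
        ≤ ENNReal.ofReal (2/(j+1 : ℝ)) := by
    intro j
    set C : ℕ := (j+1)^2 with hC
    have hC1 : 1 ≤ C := Nat.one_le_iff_ne_zero.2 (by positivity)
    have hsub : {ω | ¬ Tendsto (fun N => ∑ n ∈ Finset.Icc 1 N, 1 / Real.sqrt (S n ω)) atTop atTop}
        ⊆ {ω | ¬ ∃ i, 1 ≤ i ∧ 1 ≤ X i ω}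
          ∪ {ω | ¬ ∀ m, ∃ N, m ≤ N ∧ S (2*N) ω ≤ C*(2*N)^2} := by
      intro ω hω
      by_contra hcon
      rw [Set.mem_union] at hcon
      have h1 : ∃ i, 1 ≤ i ∧ 1 ≤ X i ω := by
        by_contra h; exact hcon (Or.inl h)
      have h2 : ∀ m, ∃ N, m ≤ N ∧ S (2*N) ω ≤ C*(2*N)^2 := by
        by_contra h; exact hcon (Or.inr h)
      exact hω (hdet C hC1 ω h1 h2)
    calc μ _ ≤ μ ({ω | ¬ ∃ i, 1 ≤ i ∧ 1 ≤ X i ω}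
          ∪ {ω | ¬ ∀ m, ∃ N, m ≤ N ∧ S (2*N) ω ≤ C*(2*N)^2}) := measure_mono hsub
      _ ≤ μ {ω | ¬ ∃ i, 1 ≤ i ∧ 1 ≤ X i ω}
          + μ {ω | ¬ ∀ m, ∃ N, m ≤ N ∧ S (2*N) ω ≤ C*(2*N)^2} := measure_union_le _ _
      _ ≤ 0 + ENNReal.ofReal (2/Real.sqrt (C:ℝ)) := by
          exact add_le_add (le_of_eq hG) (hE C hC1)
      _ = ENNReal.ofReal (2/Real.sqrt (C:ℝ)) := by rw [zero_add]
      _ = ENNReal.ofReal (2/(j+1 : ℝ)) := by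
          congr 1
          rw [hC]
          congr 1
          push_cast
          rw [Real.sqrt_sq (by positivity)]
  -- take the limit in j
  have hlim : Tendsto (fun j : ℕ => ENNReal.ofReal (2/(j+1 : ℝ))) atTop (nhds 0) := by
    rw [show (0:ℝ≥0∞) = ENNReal.ofReal 0 by simp]
    apply ENNReal.tendsto_ofReal
    have h2 : Tendsto (fun j : ℕ => 2 * (1/(j+1 : ℝ))) atTop (nhds (2 * 0)) :=
      tendsto_one_div_add_atTop_nhds_zero_nat.const_mul 2
    simpa [mul_one_div, div_eq_mul_inv] using h2
  have := ge_of_tendsto hlim (Filter.Eventually.of_forall hbad)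
  exact le_antisymm this zero_le
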